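/- arXiv:2305.02826 — 7 statements merged into one kernel-verified Lean document; each statement's English description precedes it below -/
import Mathlib

section
/- The finitely supported distribution monad is strongly representable in the following concrete sense: given a Markov kernel f : A → PMF (X × Y), define f•(a)(x) := Σ_y f(a)(x,y). Then there exists a kernel f⋄ : A → PMF (X × PMF Y) such that (i) pushing forward f⋄ along (id_X, samp) recovers f, i.e. for all a, x, y: Σ_{q : PMF Y} f⋄(a)(x, q) · q(y) = f(a)(x,y); (ii) f⋄ is deterministic given X, i.e. for each a and each x with f•(a)(x) > 0 there is a single q with f⋄(a)(x, q) > 0; and moreover any two kernels satisfying (i) and (ii) assign, for each a and each x with f•(a)(x) > 0, the same unique q, namely q(y) = f(a)(x,y) / f•(a)(x). -/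
open scoped ENNReal

namespace DistRepAux

open scoped Classical

variable {A X Y : Type*}

/-- The marginal on `X`. -/
noncomputable def marg (f : A → PMF (X × Y)) (a : A) (x : X) : ℝ≥0∞ :=
  ∑' y : Y, f a (x, y)

lemma marg_le_one (f : A → PMF (X × Y)) (a : A) (x : X) : marg f a x ≤ 1 := by
  have h : (∑' p : X × Y, f a p) = 1 := (f a).tsum_coe
  rw [ENNReal.tsum_prod'] at h
  calc marg f a x ≤ ∑' x' : X, ∑' y : Y, f a (x', y) := ENNReal.le_tsum x
    _ = 1 := h

lemma marg_ne_top (f : A → PMF (X × Y)) (a : A) (x : X) : marg f a x ≠ ⊤ :=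
  fun h => by simpa [h] using marg_le_one f a x

lemma apply_le_marg (f : A → PMF (X × Y)) (a : A) (x : X) (y : Y) :
    f a (x, y) ≤ marg f a x :=
  ENNReal.le_tsum y

/-- The Bayesian conditional when the marginal is positive, junk otherwise. -/
noncomputable def condP (f : A → PMF (X × Y)) (a : A) (x : X) : PMF Y :=
  if h : marg f a x = 0 then
    PMF.pure (((f a).support_nonempty.choose).2)
  else
    ⟨fun y => f a (x, y) / marg f a x, by
      refine ENNReal.summable.hasSum_iff.mpr ?_
      have : (∑' y : Y, f a (x, y) / marg f a x)
          = (∑' y : Y, f a (x, y)) * (marg f a x)⁻¹ := by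
        simp_rw [div_eq_mul_inv]
        exact ENNReal.tsum_mul_right
      rw [this]
      rw [← div_eq_mul_inv]
      exact ENNReal.div_self h (marg_ne_top f a x)⟩

lemma condP_apply (f : A → PMF (X × Y)) (a : A) (x : X) (h : marg f a x ≠ 0) (y : Y) :
    condP f a x y = f a (x, y) / marg f a x := by
  simp only [condP, h, ↓reduceDIte]
  rfl

lemma marg_mul_condP (f : A → PMF (X × Y)) (a : A) (x : X) (y : Y) :
    marg f a x * condP f a x y = f a (x, y) := by
  by_cases h : marg f a x = 0
  · have : f a (x, y) = 0 := le_antisymm (h ▸ apply_le_marg f a x y) zero_le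
    simp [h, this]
  · rw [condP_apply f a x h y, ENNReal.mul_div_cancel h (marg_ne_top f a x)]

/-- The constructed representing kernel. -/
noncomputable def fdK (f : A → PMF (X × Y)) (a : A) : PMF (X × PMF Y) :=
  (f a).map (fun p => (p.1, condP f a p.1))

lemma fdK_apply (f : A → PMF (X × Y)) (a : A) (x : X) (q : PMF Y) :
    fdK f a (x, q) = if q = condP f a x then marg f a x else 0 := by
  rw [fdK, PMF.map_apply, ENNReal.tsum_prod']
  trans (∑' x' : X, if (x, q) = (x', condP f a x') then marg f a x' else 0)
  · refine tsum_congr fun x' => ?_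
    by_cases h : (x, q) = (x', condP f a x')
    · rw [if_pos h]
      exact tsum_congr fun y => if_pos h
    · rw [if_neg h]
      exact ENNReal.summable.tsum_eq_zero_iff |>.mpr fun y => if_neg h
  · rw [tsum_eq_single x (fun x' hx' =>
      if_neg (fun hc => hx' ((Prod.ext_iff.mp hc).1).symm))]
    by_cases h : q = condP f a x
    · rw [if_pos (by rw [h]), if_pos h]
    · rw [if_neg (fun hc => h ((Prod.ext_iff.mp hc).2)), if_neg h]

end DistRepAux

open DistRepAux

/-- The finitely supported distribution monad is strongly representable: every kernel
`f : A → PMF (X × Y)` admits `f⋄ : A → PMF (X × PMF Y)` which recovers `f` on sampling,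
is deterministic given `X`, and any such kernel assigns the unique Bayesian conditional. -/
theorem dist_strongly_representable {A X Y : Type*} (f : A → PMF (X × Y)) :
    ∃ fd : A → PMF (X × PMF Y),
      (∀ a x y, (∑' q : PMF Y, fd a (x, q) * q y) = f a (x, y)) ∧
      (∀ a x, 0 < (∑' y : Y, f a (x, y)) → ∃! q : PMF Y, 0 < fd a (x, q)) ∧
      (∀ g : A → PMF (X × PMF Y),
        (∀ a x y, (∑' q : PMF Y, g a (x, q) * q y) = f a (x, y)) →
        (∀ a x, 0 < (∑' y : Y, f a (x, y)) → ∃! q : PMF Y, 0 < g a (x, q)) →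
        ∀ a x, 0 < (∑' y : Y, f a (x, y)) →
          ∀ q : PMF Y, 0 < g a (x, q) →
            ∀ y, q y = f a (x, y) / (∑' y' : Y, f a (x, y'))) := by
  classical
  refine ⟨fdK f, ?_, ?_, ?_⟩
  · intro a x y
    rw [tsum_eq_single (condP f a x) (fun q hq => by
      rw [fdK_apply, if_neg hq, zero_mul])]
    rw [fdK_apply, if_pos rfl]
    exact marg_mul_condP f a x y
  · intro a x hpos
    refine ⟨condP f a x, ?_, ?_⟩
    · show 0 < fdK f a (x, condP f a x)
      rw [fdK_apply, if_pos rfl]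
      exact hpos
    · intro q hq
      rw [fdK_apply] at hq
      by_contra hne
      rw [if_neg hne] at hq
      exact lt_irrefl 0 hq
  · intro g hg1 hg2 a x hpos q hq y
    obtain ⟨q₀, _, huniq⟩ := hg2 a x hpos
    have hqq₀ : q = q₀ := huniq q hq
    subst hqq₀
    have hzero : ∀ q' : PMF Y, q' ≠ q → g a (x, q') = 0 := by
      intro q' hne
      by_contra h
      exact hne (huniq q' (pos_iff_ne_zero.mpr h))
    have hkey : ∀ y' : Y, g a (x, q) * q y' = f a (x, y') := by
      intro y'
      rw [← hg1 a x y']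
      exact (tsum_eq_single (f := fun q' : PMF Y => g a (x, q') * q' y') q
        (fun q' hq' => by simp [hzero q' hq'])).symm
    have hsum : g a (x, q) = marg f a x := by
      have := ENNReal.tsum_mul_left (a := g a (x, q)) (f := fun y' => q y')
      rw [q.tsum_coe, mul_one] at this
      calc g a (x, q) = ∑' y', g a (x, q) * q y' := this.symm
        _ = ∑' y', f a (x, y') := by simp_rw [hkey]
        _ = marg f a x := rfl
    have hm0 : marg f a x ≠ 0 := pos_iff_ne_zero.mp hpos
    show q y = f a (x, y) / marg f a x
    rw [ENNReal.eq_div_iff hm0 (marg_ne_top f a x)]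
    rw [← hsum]
    exact hkey y
end

section
/- Cancellation of sampling for maps deterministic given X: let f, g : A → PMF (X × PMF Y) be kernels that are deterministic given X (for every a and every x in the support of the X-marginal, there is exactly one q ∈ PMF Y with positive probability) and whose X-marginals agree. If for all a, x, y we have Σ_q f(a)(x,q)·q(y) = Σ_q g(a)(x,q)·q(y), then f = g on the support, i.e. f(a)(x,q) = g(a)(x,q) for all a, x, q. -/
open scoped ENNReal

/-- Cancellation of sampling for kernels deterministic given `X`: if two such kernels
have the same `X`-marginals and agree after sampling the inner distribution, they agree. -/
theorem samp_cancellation {A X Y : Type*} (f g : A → PMF (X × PMF Y))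
    (hf : ∀ a x, 0 < (∑' q : PMF Y, f a (x, q)) → ∃! q : PMF Y, 0 < f a (x, q))
    (hg : ∀ a x, 0 < (∑' q : PMF Y, g a (x, q)) → ∃! q : PMF Y, 0 < g a (x, q))
    (hmarg : ∀ a x, (∑' q : PMF Y, f a (x, q)) = ∑' q : PMF Y, g a (x, q))
    (h : ∀ a x y, (∑' q : PMF Y, f a (x, q) * q y) = ∑' q : PMF Y, g a (x, q) * q y) :
    ∀ a x q, f a (x, q) = g a (x, q) := by
  intro a x
  by_cases hpos : 0 < (∑' q : PMF Y, f a (x, q))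
  · obtain ⟨qf, hqf, hqf'⟩ := hf a x hpos
    obtain ⟨qg, hqg, hqg'⟩ := hg a x (hmarg a x ▸ hpos)
    have hfz : ∀ q, q ≠ qf → f a (x, q) = 0 := fun q hq => by
      by_contra hc
      exact hq (hqf' q (pos_iff_ne_zero.mpr hc))
    have hgz : ∀ q, q ≠ qg → g a (x, q) = 0 := fun q hq => by
      by_contra hc
      exact hq (hqg' q (pos_iff_ne_zero.mpr hc))
    have hsf : (∑' q : PMF Y, f a (x, q)) = f a (x, qf) := tsum_eq_single qf hfz
    have hsg : (∑' q : PMF Y, g a (x, q)) = g a (x, qg) := tsum_eq_single qg hgz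
    have hc : f a (x, qf) = g a (x, qg) := by rw [← hsf, ← hsg, hmarg]
    have hcne : f a (x, qf) ≠ 0 := hqf.ne'
    have hcnt : f a (x, qf) ≠ ⊤ := (f a).apply_ne_top _
    have hqeq : qf = qg := by
      apply PMF.ext
      intro y
      have h1 : (∑' q : PMF Y, f a (x, q) * q y) = f a (x, qf) * qf y :=
        tsum_eq_single qf (fun q hq => by rw [hfz q hq, zero_mul])
      have h2 : (∑' q : PMF Y, g a (x, q) * q y) = g a (x, qg) * qg y :=
        tsum_eq_single qg (fun q hq => by rw [hgz q hq, zero_mul])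
      have := h a x y
      rw [h1, h2, ← hc] at this
      have h3 := congrArg (fun z => (f a (x, qf))⁻¹ * z) this
      simpa [← mul_assoc, ENNReal.inv_mul_cancel hcne hcnt, one_mul] using h3
    intro q
    by_cases hq : q = qf
    · rw [hq, hc, hqeq]
    · rw [hfz q hq, hgz q (hqeq ▸ hq)]
  · intro q
    push_neg at hpos
    have h1 : (∑' q : PMF Y, f a (x, q)) = 0 := le_antisymm hpos zero_le
    have h2 : (∑' q : PMF Y, g a (x, q)) = 0 := (hmarg a x) ▸ h1
    have := (ENNReal.tsum_eq_zero.mp h1) q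
    rw [this, (ENNReal.tsum_eq_zero.mp h2) q]
end

section
/- Existence of Bayesian inverses for finitely supported distributions: given a statistical model f : Θ → PMF X and a prior p ∈ PMF Θ, there exists a kernel f†_p : X → PMF Θ such that for all θ and x: p(θ) · f(θ)(x) = (Σ_{θ'} p(θ') · f(θ')(x)) · f†_p(x)(θ). Moreover f†_p(x) is uniquely determined for every x with Σ_{θ'} p(θ')·f(θ')(x) > 0, where it equals the Bayesian posterior f†_p(x)(θ) = p(θ)f(θ)(x) / Σ_{θ'} p(θ')f(θ')(x). -/
open scoped ENNReal

/-- Existence and almost-sure uniqueness of Bayesian inverses for finitely supported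
distributions, with the explicit Bayesian posterior formula on positive evidence. -/
theorem bayesian_inverse_exists {Θ X : Type*} (f : Θ → PMF X) (p : PMF Θ) :
    ∃ fi : X → PMF Θ,
      (∀ θ x, p θ * f θ x = (∑' θ' : Θ, p θ' * f θ' x) * fi x θ) ∧
      (∀ fi' : X → PMF Θ,
        (∀ θ x, p θ * f θ x = (∑' θ' : Θ, p θ' * f θ' x) * fi' x θ) →
        ∀ x, 0 < (∑' θ' : Θ, p θ' * f θ' x) →
          ∀ θ, fi' x θ = p θ * f θ x / (∑' θ' : Θ, p θ' * f θ' x)) := by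
  classical
  set E : X → ℝ≥0∞ := fun x => ∑' θ' : Θ, p θ' * f θ' x with hE
  have hEle : ∀ x, E x ≤ 1 := by
    intro x
    calc E x ≤ ∑' θ' : Θ, p θ' * 1 :=
          ENNReal.tsum_le_tsum fun θ' => mul_le_mul_right ((f θ').coe_le_one x) _
      _ = 1 := by simp [p.tsum_coe]
  have hEne : ∀ x, E x ≠ ∞ := fun x => ne_top_of_le_ne_top ENNReal.one_ne_top (hEle x)
  have hnorm : ∀ x, E x ≠ 0 → (∑' θ : Θ, p θ * f θ x / E x) = 1 := by
    intro x hx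
    simp only [div_eq_mul_inv, ENNReal.tsum_mul_right]
    rw [show (∑' i : Θ, p i * f i x) = E x from rfl, ← div_eq_mul_inv,
      ENNReal.div_self hx (hEne x)]
  refine ⟨fun x => if hx : E x = 0 then p else ⟨fun θ => p θ * f θ x / E x,
      (Summable.hasSum_iff ENNReal.summable).2 (hnorm x hx)⟩, ?_, ?_⟩
  · intro θ x
    by_cases hx : E x = 0
    · have : p θ * f θ x = 0 := by
        have := (ENNReal.tsum_eq_zero.mp hx) θ
        simpa using this
      show p θ * f θ x = E x * _
      rw [this, hx, zero_mul]
    · simp only [dif_neg hx]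
      erw [dif_neg hx]
      show p θ * f θ x = E x * (p θ * f θ x / E x)
      rw [ENNReal.mul_div_cancel hx (hEne x)]
  · intro fi' h x hx θ
    have hx' : E x ≠ 0 := hx.ne'
    have := h θ x
    rw [this]
    rw [mul_comm, mul_div_assoc, ENNReal.div_self hx' (hEne x), mul_one]
end

section
/- The filtering adjunction bijection in Dist: let (S, α) be a unifilar comb machine (α : S × I → PMF (S × O), deterministic given O) and (H, κ) a comb machine over finitely supported distributions. A kernel f : S → PMF H underlies a morphism of comb machines F(S,α) → (H,κ), i.e. Σ_{s'} α(s,i)(s',o)·f(s')(h') = Σ_h f(s)(h)·κ(h,i)(h',o) for all s,i,h',o, if and only if the deterministic map f□ : S → PMF H, s ↦ f(s), underlies a morphism of unifilar machines (S,α) → B((H,κ)), i.e. for all s, i, o with positive predictive probability, applying the update of α to state s with input i and output o and then f□ yields the Bayesian posterior update of the belief f(s) with respect to κ. -/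
open scoped ENNReal

/-- The hom-set bijection of the adjunction `F ⊣ B` in `Dist`: a kernel `f : S → PMF H`
underlies a morphism of comb machines `F(S,α) → (H,κ)` iff the deterministic map `f□`
underlies a morphism of unifilar machines `(S,α) → B((H,κ))`, i.e. readouts are
preserved and updating `α` then applying `f` yields the Bayesian posterior. -/
theorem filtering_adjunction_bijection {S H I O : Type*} [Nonempty I]
    (α : S × I → PMF (S × O)) (αr : S → PMF O) (u : S → I → O → S)
    (hα1 : ∀ s i o, α (s, i) (u s i o, o) = αr s o)
    (hα2 : ∀ s i o s', s' ≠ u s i o → α (s, i) (s', o) = 0)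
    (κ : H × I → PMF (H × O)) (κr : H → PMF O)
    (hκ : ∀ h i o, (∑' h' : H, κ (h, i) (h', o)) = κr h o)
    (f : S → PMF H) :
    (∀ s i h' o,
        (∑' s' : S, α (s, i) (s', o) * f s' h') = ∑' h : H, f s h * κ (h, i) (h', o))
    ↔
    ((∀ s o, αr s o = ∑' h : H, f s h * κr h o) ∧
      ∀ s i o, 0 < (∑' h : H, f s h * κr h o) →
        ∀ h', f (u s i o) h' = (∑' h : H, f s h * κ (h, i) (h', o))
          / ∑' h : H, ∑' h'' : H, f s h * κ (h, i) (h'', o)) := by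
  have collapse : ∀ s i o h',
      (∑' s' : S, α (s, i) (s', o) * f s' h') = αr s o * f (u s i o) h' := by
    intro s i o h'
    rw [tsum_eq_single (u s i o) (fun s' hs' => by rw [hα2 s i o s' hs', zero_mul]), hα1]
  have denom : ∀ s i o, (∑' h : H, ∑' h'' : H, f s h * κ (h, i) (h'', o))
      = ∑' h : H, f s h * κr h o := by
    intro s i o
    simp_rw [ENNReal.tsum_mul_left, hκ]
  constructor
  · intro hmor
    have key : ∀ s i o h', αr s o * f (u s i o) h' = ∑' h : H, f s h * κ (h, i) (h', o) := by
      intro s i o h'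
      rw [← collapse s i o h']; exact hmor s i h' o
    obtain ⟨i0⟩ := ‹Nonempty I›
    have readout : ∀ s o, αr s o = ∑' h : H, f s h * κr h o := by
      intro s o
      calc αr s o = ∑' h', αr s o * f (u s i0 o) h' := by
            rw [ENNReal.tsum_mul_left, (f (u s i0 o)).tsum_coe, mul_one]
        _ = ∑' h', ∑' h, f s h * κ (h, i0) (h', o) := by simp_rw [key]
        _ = ∑' h, ∑' h', f s h * κ (h, i0) (h', o) := ENNReal.tsum_comm
        _ = _ := denom s i0 o
    refine ⟨readout, ?_⟩
    intro s i o hpos h'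
    rw [denom, ← readout]
    have hne : αr s o ≠ 0 := by rw [readout]; exact hpos.ne'
    exact (ENNReal.eq_div_iff hne (PMF.apply_ne_top _ _)).mpr (key s i o h')
  · rintro ⟨hr, hupd⟩ s i h' o
    rw [collapse s i o h']
    by_cases h0 : (∑' h : H, f s h * κr h o) = 0
    · have hle : (∑' h : H, f s h * κ (h, i) (h', o)) ≤ 0 := by
        rw [← h0]
        exact ENNReal.tsum_le_tsum fun h =>
          mul_le_mul_right (by rw [← hκ h i o]; exact ENNReal.le_tsum h') _
      rw [hr s o, h0, zero_mul, le_antisymm hle zero_le]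
    · have hpos : 0 < (∑' h : H, f s h * κr h o) := pos_iff_ne_zero.mpr h0
      rw [hupd s i o hpos h', denom, ← hr s o]
      exact ENNReal.mul_div_cancel (by rw [hr s o]; exact h0) (PMF.apply_ne_top _ _)
end

section
/- Unifilar machines induce controlled stochastic processes satisfying the causality condition: let (S, α) be a comb machine over finitely supported distributions with readout α• and fix a state s ∈ S. Define p_n : I^{n-1} → PMF (O^n) by running the machine: p_1 := α•(s), and p_{n+1}(i₁,…,i_n)(o₀,…,o_n) := Σ over state trajectories s=s₀,s₁,…,s_n of Π_{k=0}^{n-1} α(s_k, i_{k+1})(s_{k+1}, o_k) · α•(s_n)(o_n). Then the family (p_n) is an output-first controlled stochastic process: marginalizing p_{n+1}(i₁,…,i_n) over the last output o_n yields a distribution on (o₀,…,o_{n-1}) that does not depend on the last input i_n and equals p_n(i₁,…,i_{n-1}). -/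
open scoped ENNReal

/-- Run a comb machine with transition `α` and readout `αr` from a state, on a list of
inputs and a list of outputs (one output more than inputs): the probability of producing
that output sequence, first output emitted before the first input. -/
noncomputable def combRun {S I O : Type*} (α : S × I → PMF (S × O)) (αr : S → PMF O) :
    S → List I → List O → ℝ≥0∞
  | s, [], [o] => αr s o
  | _, [], [] => 0
  | _, [], _ :: _ :: _ => 0
  | s, i :: is, o :: os => ∑' s' : S, α (s, i) (s', o) * combRun α αr s' is os
  | _, _ :: _, [] => 0

/-- Running a comb machine from a fixed state yields an output-first controlled
stochastic process: marginalising over the last output removes the dependence on the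
last input and recovers the shorter process. -/
theorem comb_machine_gives_process {S I O : Type*} (α : S × I → PMF (S × O))
    (αr : S → PMF O)
    (hcomb : ∀ s i o, (∑' s' : S, α (s, i) (s', o)) = αr s o) :
    ∀ (s : S) (is : List I) (i : I) (os : List O), os.length = is.length + 1 →
      (∑' o : O, combRun α αr s (is ++ [i]) (os ++ [o])) = combRun α αr s is os := by
  intro s is
  induction is generalizing s with
  | nil =>
    intro i os hlen
    match os, hlen with
    | [o₀], _ =>
      simp only [List.nil_append, List.singleton_append, combRun]
      rw [ENNReal.tsum_comm]
      calc (∑' s' : S, ∑' o : O, α (s, i) (s', o₀) * combRun α αr s' [] [o])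
          = ∑' s' : S, α (s, i) (s', o₀) * ∑' o : O, αr s' o := by
            simp only [combRun, ENNReal.tsum_mul_left]
        _ = ∑' s' : S, α (s, i) (s', o₀) := by
            simp [(αr _).tsum_coe]
        _ = αr s o₀ := hcomb s i o₀
  | cons i' is ih =>
    intro i os hlen
    match os, hlen with
    | o₀ :: os', hlen =>
      simp only [List.cons_append, combRun]
      rw [ENNReal.tsum_comm]
      congr 1
      funext s'
      rw [ENNReal.tsum_mul_left, ih s' i os' (by simpa using hlen)]
end

section
/- Conditioning a controlled stochastic process yields a controlled stochastic process: let (p_n)_{n≥1} with p_n : I^{n-1} → PMF (O^n) be an output-first controlled stochastic process, and let i ∈ I, o ∈ O with p_1(o) > 0. Define p^{i,o}_n(i₁,…,i_{n-1})(o₀,…,o_{n-1}) := p_{n+1}(i,i₁,…,i_{n-1})(o,o₀,…,o_{n-1}) / p_1(o). Then each p^{i,o}_n is a probability distribution on O^n, and the family (p^{i,o}_n) again satisfies the causality condition, hence is an output-first controlled stochastic process. -/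
open scoped ENNReal

private lemma key_marginal {I O : Type*}
    (p : (n : ℕ) → (Fin n → I) → PMF (Fin (n + 1) → O))
    (hcaus : ∀ (n : ℕ) (is : Fin n → I) (i : I) (os : Fin (n + 1) → O),
      (∑' o : O, p (n + 1) (Fin.snoc is i) (Fin.snoc os o)) = p n is os)
    (i : I) (o : O) :
    ∀ (n : ℕ) (is : Fin n → I),
      (∑' os : Fin (n + 1) → O, p (n + 1) (Fin.cons i is) (Fin.cons o os))
        = p 0 Fin.elim0 (fun _ => o) := by
  intro n
  induction n with
  | zero =>
    intro is
    rw [← hcaus 0 Fin.elim0 i (fun _ => o),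
      ← (Equiv.funUnique (Fin 1) O).symm.tsum_eq]
    refine tsum_congr fun o' => ?_
    have hi : (Fin.cons i is : Fin 1 → I) = Fin.snoc Fin.elim0 i := by
      ext j; fin_cases j; simp [Fin.snoc, Fin.cons]
    have ho : (Fin.cons o ((Equiv.funUnique (Fin 1) O).symm o') : Fin 2 → O)
        = Fin.snoc (fun _ => o) o' := by
      ext j; fin_cases j <;> rfl
    rw [hi, ho]
  | succ n ih =>
    intro is
    rw [← (Fin.snocEquiv (fun _ : Fin (n + 2) => O)).tsum_eq]
    have hsum : ∀ x : O × (Fin (n + 1) → O),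
        p (n + 2) (Fin.cons i is) (Fin.cons o (Fin.snocEquiv (fun _ => O) x))
          = p (n + 2) (Fin.snoc (Fin.cons i (Fin.init is)) (is (Fin.last n)))
              (Fin.snoc (Fin.cons o x.2) x.1) := by
      intro x
      congr 1
      · rw [← Fin.cons_snoc_eq_snoc_cons, Fin.snoc_init_self]
      · rw [← Fin.cons_snoc_eq_snoc_cons]
        simp [Fin.snocEquiv]
    calc (∑' x : O × (Fin (n + 1) → O),
            p (n + 2) (Fin.cons i is) (Fin.cons o (Fin.snocEquiv (fun _ => O) x)))
        = ∑' x : O × (Fin (n + 1) → O),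
            p (n + 2) (Fin.snoc (Fin.cons i (Fin.init is)) (is (Fin.last n)))
              (Fin.snoc (Fin.cons o x.2) x.1) := tsum_congr hsum
      _ = ∑' (o' : O) (os' : Fin (n + 1) → O),
            p (n + 2) (Fin.snoc (Fin.cons i (Fin.init is)) (is (Fin.last n)))
              (Fin.snoc (Fin.cons o os') o') :=
          ENNReal.tsum_prod (f := fun o' os' =>
            p (n + 2) (Fin.snoc (Fin.cons i (Fin.init is)) (is (Fin.last n)))
              (Fin.snoc (Fin.cons o os') o'))
      _ = ∑' (os' : Fin (n + 1) → O) (o' : O),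
            p (n + 2) (Fin.snoc (Fin.cons i (Fin.init is)) (is (Fin.last n)))
              (Fin.snoc (Fin.cons o os') o') := ENNReal.tsum_comm
      _ = ∑' os' : Fin (n + 1) → O,
            p (n + 1) (Fin.cons i (Fin.init is)) (Fin.cons o os') :=
          tsum_congr fun os' =>
            hcaus (n + 1) (Fin.cons i (Fin.init is)) (is (Fin.last n)) (Fin.cons o os')
      _ = p 0 Fin.elim0 (fun _ => o) := ih (Fin.init is)

/-- Conditioning a controlled stochastic process on its first input/output yields a
controlled stochastic process: the conditioned family is normalised and again satisfies
the causality condition. Here `p n` is the paper's `p_{n+1}`, taking `n` inputs and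
`n+1` outputs. -/
theorem conditioned_process_is_process {I O : Type*}
    (p : (n : ℕ) → (Fin n → I) → PMF (Fin (n + 1) → O))
    (hcaus : ∀ (n : ℕ) (is : Fin n → I) (i : I) (os : Fin (n + 1) → O),
      (∑' o : O, p (n + 1) (Fin.snoc is i) (Fin.snoc os o)) = p n is os)
    (i : I) (o : O)
    (hpos : 0 < p 0 Fin.elim0 (fun _ => o)) :
    (∀ (n : ℕ) (is : Fin n → I),
      (∑' os : Fin (n + 1) → O,
        p (n + 1) (Fin.cons i is) (Fin.cons o os) / p 0 Fin.elim0 (fun _ => o)) = 1) ∧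
    (∀ (n : ℕ) (is : Fin n → I) (i' : I) (os : Fin (n + 1) → O),
      (∑' o' : O,
        p (n + 2) (Fin.cons i (Fin.snoc is i')) (Fin.cons o (Fin.snoc os o'))
          / p 0 Fin.elim0 (fun _ => o))
      = p (n + 1) (Fin.cons i is) (Fin.cons o os) / p 0 Fin.elim0 (fun _ => o)) := by
  have hne : p 0 Fin.elim0 (fun _ => o) ≠ 0 := hpos.ne'
  have htop : p 0 Fin.elim0 (fun _ => o) ≠ ⊤ := PMF.apply_ne_top _ _
  constructor
  · intro n is
    simp only [div_eq_mul_inv, ENNReal.tsum_mul_right]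
    rw [key_marginal p hcaus i o n is, ← div_eq_mul_inv, ENNReal.div_self hne htop]
  · intro n is i' os
    simp only [div_eq_mul_inv, ENNReal.tsum_mul_right]
    congr 1
    calc (∑' o' : O, p (n + 2) (Fin.cons i (Fin.snoc is i')) (Fin.cons o (Fin.snoc os o')))
        = ∑' o' : O, p (n + 2) (Fin.snoc (Fin.cons i is) i') (Fin.snoc (Fin.cons o os) o') :=
          tsum_congr fun o' => by
            rw [Fin.cons_snoc_eq_snoc_cons, Fin.cons_snoc_eq_snoc_cons]
      _ = p (n + 1) (Fin.cons i is) (Fin.cons o os) := hcaus (n + 1) (Fin.cons i is) i' _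
end

section
/- Uniqueness of the morphism to the terminal unifilar machine: let (S, α) be a unifilar comb machine over finitely supported distributions and let T be the set of output-first controlled stochastic processes with the machine structure ω (readout p ↦ p_1, update (p,i,o) ↦ p^{i,o} for p_1(o) > 0). Then any morphism of unifilar machines h : (S,α) → (T,ω) must send each state s ∈ S to the controlled stochastic process obtained by running α from s; consequently there is at most one morphism (S,α) → (T,ω). -/
open scoped ENNReal

/-- Run a comb machine (with unifilar transition `α`, readout `αr`) from a state on
`n` inputs and `n + 1` outputs, output-first. -/
noncomputable def combRunF {S I O : Type*} (α : S × I → PMF (S × O)) (αr : S → PMF O) :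
    S → (n : ℕ) → (Fin n → I) → (Fin (n + 1) → O) → ℝ≥0∞
  | s, 0, _, os => αr s (os 0)
  | s, n + 1, is, os =>
      ∑' s' : S, α (s, is 0) (s', os 0) * combRunF α αr s' n (is ∘ Fin.succ) (os ∘ Fin.succ)

/-- Uniqueness of the morphism to the terminal unifilar machine in `Dist`: any morphism
of unifilar machines from `(S, α)` to the machine of controlled stochastic processes must
send each state to the process obtained by running `α` from it; consequently there is at
most one such morphism. -/
theorem terminal_unifilar_unique {S I O : Type*}
    (α : S × I → PMF (S × O)) (αr : S → PMF O) (u : S → I → O → S)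
    (hα1 : ∀ s i o, α (s, i) (u s i o, o) = αr s o)
    (hα2 : ∀ s i o s', s' ≠ u s i o → α (s, i) (s', o) = 0)
    (h h' : S → (n : ℕ) → (Fin n → I) → PMF (Fin (n + 1) → O))
    (hcaus : ∀ (s : S) (n : ℕ) (is : Fin n → I) (i : I) (os : Fin (n + 1) → O),
      (∑' o : O, h s (n + 1) (Fin.snoc is i) (Fin.snoc os o)) = h s n is os)
    (hcaus' : ∀ (s : S) (n : ℕ) (is : Fin n → I) (i : I) (os : Fin (n + 1) → O),
      (∑' o : O, h' s (n + 1) (Fin.snoc is i) (Fin.snoc os o)) = h' s n is os)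
    (hread : ∀ s o, αr s o = h s 0 Fin.elim0 (fun _ => o))
    (hread' : ∀ s o, αr s o = h' s 0 Fin.elim0 (fun _ => o))
    (hupd : ∀ s i o, 0 < αr s o → ∀ (n : ℕ) (is : Fin n → I) (os : Fin (n + 1) → O),
      h (u s i o) n is os
        = h s (n + 1) (Fin.cons i is) (Fin.cons o os) / h s 0 Fin.elim0 (fun _ => o))
    (hupd' : ∀ s i o, 0 < αr s o → ∀ (n : ℕ) (is : Fin n → I) (os : Fin (n + 1) → O),
      h' (u s i o) n is os
        = h' s (n + 1) (Fin.cons i is) (Fin.cons o os) / h' s 0 Fin.elim0 (fun _ => o)) :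
    (∀ (s : S) (n : ℕ) (is : Fin n → I) (os : Fin (n + 1) → O),
      h s n is os = combRunF α αr s n is os) ∧ h = h' := by
  have key : ∀ (g : S → (n : ℕ) → (Fin n → I) → PMF (Fin (n + 1) → O)),
      (∀ (s : S) (n : ℕ) (is : Fin n → I) (i : I) (os : Fin (n + 1) → O),
        (∑' o : O, g s (n + 1) (Fin.snoc is i) (Fin.snoc os o)) = g s n is os) →
      (∀ s o, αr s o = g s 0 Fin.elim0 (fun _ => o)) →
      (∀ s i o, 0 < αr s o → ∀ (n : ℕ) (is : Fin n → I) (os : Fin (n + 1) → O),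
        g (u s i o) n is os
          = g s (n + 1) (Fin.cons i is) (Fin.cons o os) / g s 0 Fin.elim0 (fun _ => o)) →
      ∀ (s : S) (n : ℕ) (is : Fin n → I) (os : Fin (n + 1) → O),
        g s n is os = combRunF α αr s n is os := by
    intro g gcaus gread gupd
    have gzero : ∀ s (is : Fin 0 → I) (os : Fin 1 → O),
        g s 0 is os = αr s (os 0) := by
      intro s is os
      rw [gread, Subsingleton.elim is Fin.elim0]
      congr 1
      funext x
      exact congrArg os (Subsingleton.elim _ _)
    have gmono : ∀ (n : ℕ) s (is : Fin n → I) (os : Fin (n + 1) → O),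
        g s n is os ≤ αr s (os 0) := by
      intro n
      induction n with
      | zero => intro s is os; rw [gzero]
      | succ n ih =>
        intro s is os
        have h1 : g s (n + 1) is os
            ≤ ∑' o : O, g s (n + 1) (Fin.snoc (Fin.init is) (is (Fin.last n)))
              (Fin.snoc (Fin.init os) o) := by
          refine le_trans (le_of_eq ?_) (ENNReal.le_tsum (os (Fin.last (n + 1))))
          rw [Fin.snoc_init_self, Fin.snoc_init_self]
        rw [gcaus] at h1
        refine le_trans h1 (le_trans (ih s (Fin.init is) (Fin.init os)) (le_of_eq ?_))
        congr 1
    intro s n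
    induction n generalizing s with
    | zero =>
      intro is os
      rw [gzero]
      rfl
    | succ n ih =>
      intro is os
      have hrun : combRunF α αr s (n + 1) is os
          = αr s (os 0) * g (u s (is 0) (os 0)) n (is ∘ Fin.succ) (os ∘ Fin.succ) := by
        show (∑' s' : S, α (s, is 0) (s', os 0)
            * combRunF α αr s' n (is ∘ Fin.succ) (os ∘ Fin.succ)) = _
        rw [tsum_eq_single (u s (is 0) (os 0)) (by
          intro s' hs'
          rw [hα2 s (is 0) (os 0) s' hs', zero_mul])]
        rw [hα1, ih]
      rw [hrun]
      have hcons : is = Fin.cons (is 0) (is ∘ Fin.succ) := (Fin.cons_self_tail is).symm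
      have hcons' : os = Fin.cons (os 0) (os ∘ Fin.succ) := (Fin.cons_self_tail os).symm
      rcases eq_or_lt_of_le (zero_le : (0 : ℝ≥0∞) ≤ αr s (os 0)) with hz | hpos
      · rw [← hz, zero_mul]
        have := gmono (n + 1) s is os
        rw [← hz] at this
        exact le_antisymm this zero_le
      · rw [gupd s (is 0) (os 0) hpos n (is ∘ Fin.succ) (os ∘ Fin.succ), ← gread,
          ← hcons, ← hcons']
        rw [ENNReal.mul_div_cancel hpos.ne' (by
          exact ne_of_lt (lt_of_le_of_lt (PMF.coe_le_one _ _) (by norm_num)))]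
  constructor
  · exact key h hcaus hread hupd
  · funext s n is
    have := fun os => (key h hcaus hread hupd s n is os).trans
      (key h' hcaus' hread' hupd' s n is os).symm
    ext os
    exact this os
end
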